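/- Let w be any function in the shape space P(K) = P₂(K) + span{x₁³, x₂³, x₃³, x₁x₂x₃} of the three-dimensional cubic Morley element on the cube K. Then for each i ∈ {1, 2, 3}, the deviation of ∂w/∂xᵢ from its face mean is the same function on the two opposite faces of K normal to the xᵢ-axis: (R⁰_{Fᵢ⁺}(∂w/∂xᵢ))(y) = (R⁰_{Fᵢ⁻}(∂w/∂xᵢ))(y) for all points y of the common parameter domain of the two faces. -/

import Mathlib

open MeasureTheory

lemma cubic_deriv (A B C D x : ℝ) :
    deriv (fun t : ℝ => A + B * t + C * t ^ 2 + D * t ^ 3) x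
      = B + C * (2 * x) + D * (3 * x ^ 2) := by
  have H : HasDerivAt (fun t : ℝ => A + B * t + C * t ^ 2 + D * t ^ 3)
      (B + C * (2 * x) + D * (3 * x ^ 2)) x := by
    have h1 := (hasDerivAt_id x).const_mul B
    have h2 := (hasDerivAt_pow 2 x).const_mul C
    have h3 := (hasDerivAt_pow 3 x).const_mul D
    have := (((hasDerivAt_const x A).add h1).add h2).add h3
    refine this.congr_deriv ?_
    push_cast
    ring
  exact H.deriv

lemma int_affine (a b α β : ℝ) :
    (∫ t in a..b, (α + β * t)) = α * (b - a) + β * ((b ^ 2 - a ^ 2) / 2) := by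
  rw [intervalIntegral.integral_add intervalIntegrable_const
      ((show Continuous fun t : ℝ => β * t from continuous_const.mul continuous_id').intervalIntegrable a b),
    intervalIntegral.integral_const, intervalIntegral.integral_const_mul,
    integral_id, smul_eq_mul]
  ring

lemma double_int (a2 a3 h P R S T : ℝ) :
    (∫ s in (a2 - h)..(a2 + h), ∫ t in (a3 - h)..(a3 + h), (P + R * s + S * t + T * (s * t)))
      = 4 * h ^ 2 * P + 4 * h ^ 2 * a2 * R + 4 * h ^ 2 * a3 * S + 4 * h ^ 2 * (a2 * a3) * T := by
  have hin : ∀ s : ℝ, (∫ t in (a3 - h)..(a3 + h), (P + R * s + S * t + T * (s * t)))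
      = (2 * h * P + 2 * a3 * h * S) + (2 * h * R + 2 * a3 * h * T) * s := by
    intro s
    have : (∫ t in (a3 - h)..(a3 + h), (P + R * s + S * t + T * (s * t)))
        = ∫ t in (a3 - h)..(a3 + h), ((P + R * s) + (S + T * s) * t) :=
      intervalIntegral.integral_congr (fun t _ => by ring)
    rw [this, int_affine]
    ring
  rw [intervalIntegral.integral_congr (fun s _ => hin s), int_affine]
  ring

/-- Partial derivative in the first variable of a curried function on `ℝ³`. -/
noncomputable def qd1 (f : ℝ → ℝ → ℝ → ℝ) : ℝ → ℝ → ℝ → ℝ :=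
  fun x y z => deriv (fun t => f t y z) x

/-- Partial derivative in the second variable of a curried function on `ℝ³`. -/
noncomputable def qd2 (f : ℝ → ℝ → ℝ → ℝ) : ℝ → ℝ → ℝ → ℝ :=
  fun x y z => deriv (fun t => f x t z) y

/-- Partial derivative in the third variable of a curried function on `ℝ³`. -/
noncomputable def qd3 (f : ℝ → ℝ → ℝ → ℝ) : ℝ → ℝ → ℝ → ℝ :=
  fun x y z => deriv (fun t => f x y t) z

/-- Membership in the shape space `P(K) = P₂(K) + span{x₁³, x₂³, x₃³, x₁x₂x₃}` of the
three-dimensional cubic Morley element. -/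
def MorleyShape3 (w : ℝ → ℝ → ℝ → ℝ) : Prop :=
  ∃ c0 c1 c2 c3 c4 c5 c6 c7 c8 c9 c10 c11 c12 c13 : ℝ, ∀ x y z : ℝ,
    w x y z = c0 + c1 * x + c2 * y + c3 * z + c4 * x ^ 2 + c5 * y ^ 2 + c6 * z ^ 2
      + c7 * (x * y) + c8 * (x * z) + c9 * (y * z)
      + c10 * x ^ 3 + c11 * y ^ 3 + c12 * z ^ 3 + c13 * (x * y * z)

/-- For `w` in the 3D cubic Morley shape space, the deviation of `∂w/∂xᵢ` from its face
mean coincides on the two opposite faces of `K` normal to the `xᵢ`-axis, `i = 1, 2, 3`. -/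
theorem stmt_12 (c1 c2 c3 h : ℝ) (hh : 0 < h) (w : ℝ → ℝ → ℝ → ℝ)
    (hw : MorleyShape3 w) :
    (∀ y ∈ Set.Icc (c2 - h) (c2 + h), ∀ z ∈ Set.Icc (c3 - h) (c3 + h),
        qd1 w (c1 + h) y z
            - (1 / (4 * h ^ 2)) * (∫ s in (c2 - h)..(c2 + h), ∫ t in (c3 - h)..(c3 + h), qd1 w (c1 + h) s t)
          = qd1 w (c1 - h) y z
            - (1 / (4 * h ^ 2)) * (∫ s in (c2 - h)..(c2 + h), ∫ t in (c3 - h)..(c3 + h), qd1 w (c1 - h) s t)) ∧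
    (∀ x ∈ Set.Icc (c1 - h) (c1 + h), ∀ z ∈ Set.Icc (c3 - h) (c3 + h),
        qd2 w x (c2 + h) z
            - (1 / (4 * h ^ 2)) * (∫ s in (c1 - h)..(c1 + h), ∫ t in (c3 - h)..(c3 + h), qd2 w s (c2 + h) t)
          = qd2 w x (c2 - h) z
            - (1 / (4 * h ^ 2)) * (∫ s in (c1 - h)..(c1 + h), ∫ t in (c3 - h)..(c3 + h), qd2 w s (c2 - h) t)) ∧
    (∀ x ∈ Set.Icc (c1 - h) (c1 + h), ∀ y ∈ Set.Icc (c2 - h) (c2 + h),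
        qd3 w x y (c3 + h)
            - (1 / (4 * h ^ 2)) * (∫ s in (c1 - h)..(c1 + h), ∫ t in (c2 - h)..(c2 + h), qd3 w s t (c3 + h))
          = qd3 w x y (c3 - h)
            - (1 / (4 * h ^ 2)) * (∫ s in (c1 - h)..(c1 + h), ∫ t in (c2 - h)..(c2 + h), qd3 w s t (c3 - h))) := by

  obtain ⟨a0, a1, a2, a3, a4, a5, a6, a7, a8, a9, a10, a11, a12, a13, hw⟩ := hw
  have hne : h ≠ 0 := ne_of_gt hh
  have hq1 : ∀ x y z : ℝ, qd1 w x y z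
      = (a1 + a4 * (2 * x) + a10 * (3 * x ^ 2)) + a7 * y + a8 * z + a13 * (y * z) := by
    intro x y z
    have hfun : (fun t => w t y z) = fun t : ℝ =>
        (a0 + a2 * y + a3 * z + a5 * y ^ 2 + a6 * z ^ 2 + a9 * (y * z) + a11 * y ^ 3
          + a12 * z ^ 3) + (a1 + a7 * y + a8 * z + a13 * (y * z)) * t + a4 * t ^ 2
          + a10 * t ^ 3 :=
      funext fun t => by rw [hw]; ring
    rw [qd1, hfun, cubic_deriv]; ring
  have hq2 : ∀ x y z : ℝ, qd2 w x y z
      = (a2 + a5 * (2 * y) + a11 * (3 * y ^ 2)) + a7 * x + a9 * z + a13 * (x * z) := by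
    intro x y z
    have hfun : (fun t => w x t z) = fun t : ℝ =>
        (a0 + a1 * x + a3 * z + a4 * x ^ 2 + a6 * z ^ 2 + a8 * (x * z) + a10 * x ^ 3
          + a12 * z ^ 3) + (a2 + a7 * x + a9 * z + a13 * (x * z)) * t + a5 * t ^ 2
          + a11 * t ^ 3 :=
      funext fun t => by rw [hw]; ring
    rw [qd2, hfun, cubic_deriv]; ring
  have hq3 : ∀ x y z : ℝ, qd3 w x y z
      = (a3 + a6 * (2 * z) + a12 * (3 * z ^ 2)) + a8 * x + a9 * y + a13 * (x * y) := by
    intro x y z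
    have hfun : (fun t => w x y t) = fun t : ℝ =>
        (a0 + a1 * x + a2 * y + a4 * x ^ 2 + a5 * y ^ 2 + a7 * (x * y) + a10 * x ^ 3
          + a11 * y ^ 3) + (a3 + a8 * x + a9 * y + a13 * (x * y)) * t + a6 * t ^ 2
          + a12 * t ^ 3 :=
      funext fun t => by rw [hw]; ring
    rw [qd3, hfun, cubic_deriv]; ring
  refine ⟨?_, ?_, ?_⟩
  · intro y hy z hz
    simp only [hq1]
    rw [double_int, double_int]
    field_simp
    ring
  · intro x hx z hz
    simp only [hq2]
    rw [double_int, double_int]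
    field_simp
    ring
  · intro x hx y hy
    simp only [hq3]
    rw [double_int, double_int]
    field_simp
    ring
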